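/- Let X be a weakly compactly generated real Banach space which is a 𝒦-space with constant K. Then every bounded quasilinear map F : X → c₀ with constant 1 admits a (not necessarily continuous) linear map L : X → c₀ such that ‖F(x) − L(x)‖_∞ ≤ 2(2K+1)‖x‖ for all x ∈ X. In particular K₀(X, c₀) is finite. -/

import Mathlib

open Finset

/-- The Banach space `c₀` of real null sequences with the sup norm. -/
abbrev NullSeq : Type := ZeroAtInftyContinuousMap ℕ ℝ

/-- `F : X → Y` is quasilinear with constant `Q`. -/
def IsQuasilinearWith {X Y : Type*} [NormedAddCommGroup X] [NormedSpace ℝ X]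
    [NormedAddCommGroup Y] [NormedSpace ℝ Y] (Q : ℝ) (F : X → Y) : Prop :=
  (∀ (c : ℝ) (x : X), F (c • x) = c • F x) ∧
    ∀ x y : X, ‖F (x + y) - F x - F y‖ ≤ Q * (‖x‖ + ‖y‖)

/-- `X` is weakly compactly generated: it contains a weakly compact subset whose
linear span is dense. -/
def IsWCG (X : Type*) [NormedAddCommGroup X] [NormedSpace ℝ X] : Prop :=
  ∃ s : Set X, IsCompact (toWeakSpace ℝ X '' s) ∧
    Dense (↑(Submodule.span ℝ s) : Set X)

/-- `X` is a 𝒦-space with constant `K`: every real-valued homogeneous map with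
quasilinearity constant 1 is at distance at most `K` from a (not necessarily
continuous) linear functional. -/
def IsKSpaceWith (K : ℝ) (X : Type*) [NormedAddCommGroup X] [NormedSpace ℝ X] : Prop :=
  ∀ f : X → ℝ, (∀ (c : ℝ) (x : X), f (c • x) = c * f x) →
    (∀ x y : X, |f (x + y) - f x - f y| ≤ ‖x‖ + ‖y‖) →
    ∃ ℓ : X →ₗ[ℝ] ℝ, ∀ x : X, |f x - ℓ x| ≤ K * ‖x‖

open Filter Topology Set

section KeySelection

variable {X : Type*} [NormedAddCommGroup X] [NormedSpace ℝ X]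

/-- The key selection lemma: if `X` is WCG and `(ℓ n)` is a uniformly bounded sequence of
linear functionals whose pointwise "limsup" is at most `K * ‖x‖`, then one can find
linear functionals `g n` bounded by `K * ‖x‖` with `ℓ n x - g n x → 0` for every `x`. -/
theorem key_selection (B K : ℝ) (hB : 0 ≤ B)
    (s : Set X) (hsc : IsCompact (toWeakSpace ℝ X '' s))
    (hsd : Dense (↑(Submodule.span ℝ s) : Set X))
    (ℓ : ℕ → X →ₗ[ℝ] ℝ)
    (hlb : ∀ n x, |ℓ n x| ≤ B * ‖x‖)
    (hsmall : ∀ x : X, ∀ ε > 0, ∃ m, ∀ k ≥ m, |ℓ k x| ≤ K * ‖x‖ + ε) :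
    ∃ g : ℕ → X →ₗ[ℝ] ℝ, (∀ n x, |g n x| ≤ K * ‖x‖) ∧
      (∀ x, Tendsto (fun n => ℓ n x - g n x) atTop (𝓝 0)) := by
  classical
  set H : ℕ → X → ℝ := fun n x => ℓ n x with hH
  -- the compact "product" box
  set P : Set (X → ℝ) := Set.pi univ fun x => Icc (-(B * ‖x‖)) (B * ‖x‖) with hPdef
  have hPc : IsCompact P := isCompact_univ_pi fun x => isCompact_Icc
  have hHP : range H ⊆ P := by
    rintro _ ⟨n, rfl⟩ x _
    exact abs_le.mp (hlb n x)
  set T : Set (X → ℝ) := closure (range H) with hT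
  have hTP : T ⊆ P := closure_minimal hHP hPc.isClosed
  have hTc : IsCompact T := hPc.of_isClosed_subset isClosed_closure hTP
  -- elements of T are linear and bounded
  have hTadd : ∀ t ∈ T, ∀ x y : X, t (x + y) = t x + t y := by
    intro t ht x y
    have : T ⊆ {f : X → ℝ | f (x + y) = f x + f y} :=
      closure_minimal (by rintro _ ⟨n, rfl⟩; exact (ℓ n).map_add x y)
        (isClosed_eq (continuous_apply _) ((continuous_apply x).add (continuous_apply y)))
    exact this ht
  have hTsmul : ∀ t ∈ T, ∀ (c : ℝ) (x : X), t (c • x) = c * t x := by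
    intro t ht c x
    have : T ⊆ {f : X → ℝ | f (c • x) = c * f x} :=
      closure_minimal (by rintro _ ⟨n, rfl⟩; exact (ℓ n).map_smul c x)
        (isClosed_eq (continuous_apply _) (continuous_const.mul (continuous_apply _)))
    exact this ht
  have hTbd : ∀ t ∈ T, ∀ x : X, |t x| ≤ B * ‖x‖ := fun t ht x =>
    abs_le.mpr (hTP ht x (mem_univ x))
  -- pairs with the same `e`-image are not separated by elements of T
  have hTfib : ∀ t ∈ T, ∀ x y : X, (∀ n, ℓ n x = ℓ n y) → t x = t y := by
    intro t ht x y hxy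
    have : T ⊆ {f : X → ℝ | f x = f y} :=
      closure_minimal (by rintro _ ⟨n, rfl⟩; exact hxy n)
        (isClosed_eq (continuous_apply _) (continuous_apply _))
    exact this ht
  -- continuous versions of the functionals
  have hlbn : ∀ n (x : X), ‖ℓ n x‖ ≤ B * ‖x‖ := by
    intro n x; simpa [Real.norm_eq_abs] using hlb n x
  set φ : ℕ → X →L[ℝ] ℝ := fun n => LinearMap.mkContinuous (ℓ n) B (hlbn n) with hφ
  -- the weakly compact set as a subtype
  set W : Set (WeakSpace ℝ X) := toWeakSpace ℝ X '' s with hWdef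
  haveI hWcs : CompactSpace W := isCompact_iff_compactSpace.mp hsc
  set pt : W → X := fun w => (toWeakSpace ℝ X).symm w.1 with hpt
  set e : W → ℕ → ℝ := fun w n => ℓ n (pt w) with he
  have hφcont : ∀ n, Continuous fun v : WeakSpace ℝ X => ℓ n ((toWeakSpace ℝ X).symm v) :=
    fun n => WeakBilin.eval_continuous ((topDualPairing ℝ X).flip) (φ n)
  have hecont : Continuous e :=
    continuous_pi fun n => (hφcont n).comp continuous_subtype_val
  -- a countable dense subset of the range of `e`
  set S : Set (ℕ → ℝ) := range e with hS
  obtain ⟨c, hccount, hcdense⟩ := TopologicalSpace.exists_countable_dense S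
  set sec : S → W := fun y => y.2.choose with hsec
  have hsecspec : ∀ y : S, e (sec y) = y.1 := fun y => y.2.choose_spec
  -- the countable set in X
  set QX : Set X := (fun y : S => pt (sec y)) '' c with hQX
  have hQXcount : QX.Countable := hccount.image _
  obtain ⟨q, hq⟩ : ∃ q : ℕ → X, QX ∪ {0} = range q :=
    (hQXcount.union (countable_singleton 0)).exists_eq_range
      (by simp)
  have hQXq : QX ⊆ range q := by rw [← hq]; exact subset_union_left
  -- separation: elements of T agreeing on range q agree everywhere
  have hsep : ∀ t ∈ T, ∀ t' ∈ T, (∀ i, t (q i) = t' (q i)) → t = t' := by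
    intro t ht t' ht' hqq
    -- the difference functional
    have hδadd : ∀ x y : X, (t x - t' x) + (t y - t' y) = t (x+y) - t' (x+y) := by
      intro x y; rw [hTadd t ht x y, hTadd t' ht' x y]; ring
    have hδlin : IsLinearMap ℝ (fun x => t x - t' x) := by
      constructor
      · intro x y
        show t (x + y) - t' (x + y) = (t x - t' x) + (t y - t' y)
        rw [hTadd t ht x y, hTadd t' ht' x y]; ring
      · intro c x
        show t (c • x) - t' (c • x) = c • (t x - t' x)
        rw [hTsmul t ht c x, hTsmul t' ht' c x, smul_eq_mul]; ring
    set δL : X →ₗ[ℝ] ℝ := IsLinearMap.mk' _ hδlin with hδL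
    have hδLbd : ∀ x, ‖δL x‖ ≤ (B + B) * ‖x‖ := by
      intro x
      have h1 := hTbd t ht x
      have h2 := hTbd t' ht' x
      simp only [Real.norm_eq_abs, hδL, IsLinearMap.mk'_apply]
      calc |t x - t' x| ≤ |t x| + |t' x| := by
            have := abs_add_le (t x) (-(t' x)); simpa [sub_eq_add_neg] using this
        _ ≤ B * ‖x‖ + B * ‖x‖ := add_le_add h1 h2
        _ = (B + B) * ‖x‖ := by ring
    set δC : X →L[ℝ] ℝ := LinearMap.mkContinuous δL (B + B) hδLbd with hδC
    have hδzeroQX : ∀ x ∈ QX, t x = t' x := by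
      intro x hx
      rcases hQXq hx with ⟨i, rfl⟩
      exact hqq i
    -- descend to the range of e
    set δW : W → ℝ := fun w => t (pt w) - t' (pt w) with hδW
    have hδWcont : Continuous δW := by
      have : Continuous fun v : WeakSpace ℝ X => δC ((toWeakSpace ℝ X).symm v) :=
        WeakBilin.eval_continuous ((topDualPairing ℝ X).flip) δC
      exact this.comp continuous_subtype_val
    have hδWfib : ∀ w w' : W, e w = e w' → δW w = δW w' := by
      intro w w' hww
      have hpts : ∀ n, ℓ n (pt w) = ℓ n (pt w') := fun n => congrFun hww n
      show t (pt w) - t' (pt w) = t (pt w') - t' (pt w')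
      rw [hTfib t ht _ _ hpts, hTfib t' ht' _ _ hpts]
    set ehat : W → S := fun w => ⟨e w, mem_range_self w⟩ with hehat
    have hehatcont : Continuous ehat := hecont.subtype_mk _
    have hehatsurj : Function.Surjective ehat := by
      intro y
      exact ⟨sec y, Subtype.ext (hsecspec y)⟩
    have hehatclosed : ∀ C : Set W, IsClosed C → IsClosed (ehat '' C) := by
      intro C hC
      exact ((hC.isCompact).image hehatcont).isClosed
    set δhat : S → ℝ := fun y => δW (sec y) with hδhat
    have hδhatcomp : ∀ w : W, δhat (ehat w) = δW w := by
      intro w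
      apply hδWfib
      rw [hsecspec ⟨e w, mem_range_self w⟩]
    have hδhatcont : Continuous δhat := by
      rw [continuous_iff_isClosed]
      intro C hC
      have : δhat ⁻¹' C = ehat '' (δW ⁻¹' C) := by
        ext y
        constructor
        · intro hy
          refine ⟨sec y, ?_, Subtype.ext (hsecspec y)⟩
          simpa [hδhat] using hy
        · rintro ⟨w, hw, rfl⟩
          simpa [hδhatcomp w] using hw
      rw [this]
      exact hehatclosed _ (hC.preimage hδWcont)
    have hδhatzero : δhat = fun _ => (0 : ℝ) := by
      apply Continuous.ext_on hcdense hδhatcont continuous_const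
      intro y hy
      have : pt (sec y) ∈ QX := ⟨y, hy, rfl⟩
      have h0 := hδzeroQX _ this
      simp [hδhat, hδW, h0, sub_eq_zero.mpr h0]
    -- so t = t' on s
    have hts : ∀ x ∈ s, t x = t' x := by
      intro x hx
      have hw : (toWeakSpace ℝ X) x ∈ W := mem_image_of_mem _ hx
      have h0 : δW ⟨_, hw⟩ = 0 := by
        rw [← hδhatcomp ⟨_, hw⟩, hδhatzero]
      have hptw : pt ⟨toWeakSpace ℝ X x, hw⟩ = x := (toWeakSpace ℝ X).symm_apply_apply x
      have h1 : t x - t' x = 0 := by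
        have h2 := h0
        simp only [hδW, hptw] at h2
        exact h2
      linarith
    -- then on the span, then everywhere
    have htspan : ∀ x ∈ (Submodule.span ℝ s : Submodule ℝ X), t x = t' x := by
      intro x hx
      induction hx using Submodule.span_induction with
      | mem x hxs => exact hts x hxs
      | zero =>
          have h1 : t ((0:ℝ) • (0:X)) = 0 * t 0 := hTsmul t ht 0 0
          have h2 : t' ((0:ℝ) • (0:X)) = 0 * t' 0 := hTsmul t' ht' 0 0
          simp only [zero_smul, zero_mul] at h1 h2
          rw [h1, h2]
      | add x y _ _ hx hy => rw [hTadd t ht x y, hTadd t' ht' x y, hx, hy]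
      | smul c x _ hx => rw [hTsmul t ht c x, hTsmul t' ht' c x, hx]
    have hzero : (⇑δC) = fun _ : X => (0:ℝ) := by
      apply Continuous.ext_on hsd δC.continuous continuous_const
      intro x hx
      show δC x = 0
      simp only [hδC, LinearMap.mkContinuous_apply, hδL, IsLinearMap.mk'_apply]
      exact sub_eq_zero.mpr (htspan x hx)
    funext x
    have hcf := congrFun hzero x
    simp only [hδC, LinearMap.mkContinuous_apply, hδL, IsLinearMap.mk'_apply] at hcf
    exact sub_eq_zero.mp hcf
  -- metrizability of T
  haveI hTcs : CompactSpace T := isCompact_iff_compactSpace.mp hTc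
  have hEcont : Continuous (fun t : T => (fun i => t.1 (q i) : ℕ → ℝ)) :=
    continuous_pi fun i => (continuous_apply (q i)).comp continuous_subtype_val
  have hEinj : Function.Injective (fun t : T => (fun i => t.1 (q i) : ℕ → ℝ)) := by
    intro t t' htt
    exact Subtype.ext (hsep t.1 t.2 t'.1 t'.2 fun i => congrFun htt i)
  haveI : TopologicalSpace.MetrizableSpace T :=
    (hEcont.isClosedEmbedding hEinj).isEmbedding.metrizableSpace
  letI : MetricSpace T := TopologicalSpace.metrizableSpaceMetric T
  -- the sequence inside T and its cluster set
  set u : ℕ → T := fun n => ⟨H n, subset_closure (mem_range_self n)⟩ with hu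
  set D : Set T := ⋂ m : ℕ, closure (u '' Ici m) with hD
  have hclusterD : ∀ (ψ : ℕ → ℕ), StrictMono ψ → ∀ a : T,
      Tendsto (u ∘ ψ) atTop (𝓝 a) → a ∈ D := by
    intro ψ hψ a ha
    rw [hD, mem_iInter]
    intro m
    apply mem_closure_of_tendsto ha
    filter_upwards [eventually_ge_atTop m] with k hk
    exact ⟨ψ k, le_trans hk (hψ.le_apply), rfl⟩
  have hDne : D.Nonempty := by
    obtain ⟨a, _, ψ, hψ, ha⟩ := isCompact_univ.tendsto_subseq (fun n => mem_univ (u n))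
    exact ⟨a, hclusterD ψ hψ a ha⟩
  have hDclosed : IsClosed D := isClosed_iInter fun m => isClosed_closure
  -- infDist to the cluster set tends to zero
  have hinf : Tendsto (fun n => Metric.infDist (u n) D) atTop (𝓝 0) := by
    rw [Metric.tendsto_atTop]
    intro ε hε
    by_contra hcon
    push_neg at hcon
    have hfreq : ∃ᶠ n in atTop, ε ≤ Metric.infDist (u n) D := by
      rw [frequently_atTop]
      intro m
      obtain ⟨n, hn, hdist⟩ := hcon m
      refine ⟨n, hn, ?_⟩
      have h0 : 0 ≤ Metric.infDist (u n) D := Metric.infDist_nonneg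
      rw [Real.dist_eq, sub_zero, abs_of_nonneg h0] at hdist
      linarith
    obtain ⟨ψ, hψ, hψprop⟩ := extraction_of_frequently_atTop hfreq
    obtain ⟨a, _, ρ, hρ, ha⟩ := isCompact_univ.tendsto_subseq
      (fun k => mem_univ ((u ∘ ψ) k))
    have haD : a ∈ D := hclusterD (ψ ∘ ρ) (hψ.comp hρ) a ha
    have : Tendsto (fun k => Metric.infDist ((u ∘ ψ ∘ ρ) k) D) atTop (𝓝 0) := by
      have hle : ∀ k, Metric.infDist ((u ∘ ψ ∘ ρ) k) D ≤ dist ((u ∘ ψ ∘ ρ) k) a :=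
        fun k => Metric.infDist_le_dist_of_mem haD
      have hd : Tendsto (fun k => dist ((u ∘ ψ ∘ ρ) k) a) atTop (𝓝 0) :=
        tendsto_iff_dist_tendsto_zero.mp ha
      exact squeeze_zero (fun k => Metric.infDist_nonneg) hle hd
    have hev : ∀ᶠ k in atTop, Metric.infDist ((u ∘ ψ ∘ ρ) k) D < ε := by
      have := Metric.tendsto_atTop.mp this ε hε
      obtain ⟨N, hN⟩ := this
      filter_upwards [eventually_ge_atTop N] with k hk
      have := hN k hk
      rw [Real.dist_eq, sub_zero, abs_of_nonneg Metric.infDist_nonneg] at this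
      exact this
    obtain ⟨k, hk⟩ := hev.exists
    exact absurd (hψprop (ρ k)) (not_le.mpr hk)
  -- select approximating cluster points
  have hsel : ∀ n : ℕ, ∃ γ ∈ D, dist (u n) γ < Metric.infDist (u n) D + 1/(n+1) := by
    intro n
    apply (Metric.infDist_lt_iff hDne).mp
    have : (0:ℝ) < 1/(n+1) := by positivity
    linarith
  choose γ hγD hγdist using hsel
  have hγ0 : Tendsto (fun n => dist (u n) (γ n)) atTop (𝓝 0) := by
    apply squeeze_zero (fun n => dist_nonneg) (fun n => (hγdist n).le)
    have h1 : Tendsto (fun n : ℕ => 1/((n:ℝ)+1)) atTop (𝓝 0) := tendsto_one_div_add_atTop_nhds_zero_nat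
    simpa using hinf.add h1
  -- properties of the selected functions
  have hγT : ∀ n, (γ n).1 ∈ T := fun n => (γ n).2
  have hγbd : ∀ n (x : X), |(γ n).1 x| ≤ K * ‖x‖ := by
    intro n x
    apply le_of_forall_pos_le_add
    intro ε hε
    obtain ⟨m, hm⟩ := hsmall x (ε/2) (by linarith)
    -- γ n is in the closure of the image of the tail
    have hmem : (γ n : T) ∈ closure (u '' Ici m) := by
      have := hγD n
      rw [hD, mem_iInter] at this
      exact this m
    -- in the ambient space
    have hmem' : ((γ n : T) : X → ℝ) ∈ closure (H '' Ici m) := by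
      have h2 := (closure_subtype).mp hmem
      rw [Set.image_image] at h2
      exact h2
    -- find a close tail element at the coordinate x
    have hopen : IsOpen {f : X → ℝ | |f x - (γ n).1 x| < ε/2} := by
      have : Continuous fun f : X → ℝ => f x - (γ n).1 x :=
        (continuous_apply x).sub continuous_const
      have habs : Continuous fun f : X → ℝ => |f x - (γ n).1 x| := this.abs
      exact isOpen_lt habs continuous_const
    have hself : ((γ n).1 : X → ℝ) ∈ {f : X → ℝ | |f x - (γ n).1 x| < ε/2} := by
      simp only [mem_setOf_eq, sub_self, abs_zero]
      linarith
    obtain ⟨f, hf1, hf2⟩ := _root_.mem_closure_iff.mp hmem' _ hopen hself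
    rcases hf2 with ⟨k, hk, rfl⟩
    have h1 : |H k x - (γ n).1 x| < ε/2 := hf1
    have h2 : |ℓ k x| ≤ K * ‖x‖ + ε/2 := hm k hk
    have h3 : |(γ n).1 x| ≤ |H k x| + |H k x - (γ n).1 x| := by
      have h4 := abs_add_le (H k x) ((γ n).1 x - H k x)
      rw [abs_sub_comm ((γ n).1 x) (H k x)] at h4
      simpa using h4
    calc |(γ n).1 x| ≤ |H k x| + |H k x - (γ n).1 x| := h3
      _ ≤ (K * ‖x‖ + ε/2) + ε/2 := add_le_add h2 h1.le
      _ = K * ‖x‖ + ε := by ring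
  -- pointwise convergence via a subsequence argument
  have hconv : ∀ x : X, Tendsto (fun n => ℓ n x - (γ n).1 x) atTop (𝓝 0) := by
    intro x
    by_contra hcon
    rw [Metric.tendsto_atTop] at hcon
    push_neg at hcon
    obtain ⟨ε, hε, hfreq⟩ := hcon
    have hfreq' : ∃ᶠ n in atTop, ε ≤ |ℓ n x - (γ n).1 x| := by
      rw [frequently_atTop]
      intro m
      obtain ⟨n, hn, h⟩ := hfreq m
      rw [Real.dist_eq, sub_zero] at h
      exact ⟨n, hn, h⟩
    obtain ⟨ψ, hψ, hψprop⟩ := extraction_of_frequently_atTop hfreq'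
    obtain ⟨a, _, ρ, hρ, ha⟩ := isCompact_univ.tendsto_subseq
      (fun k => mem_univ ((u ∘ ψ) k))
    have hγa : Tendsto (fun k => γ (ψ (ρ k))) atTop (𝓝 a) := by
      rw [tendsto_iff_dist_tendsto_zero]
      have h1 : ∀ k, dist (γ (ψ (ρ k))) a ≤
          dist (u (ψ (ρ k))) (γ (ψ (ρ k))) + dist ((u ∘ ψ ∘ ρ) k) a := by
        intro k
        have h2 := dist_triangle (γ (ψ (ρ k))) (u (ψ (ρ k))) a
        have h3 : dist (γ (ψ (ρ k))) (u (ψ (ρ k))) = dist (u (ψ (ρ k))) (γ (ψ (ρ k))) :=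
          dist_comm _ _
        rw [h3] at h2
        exact h2
      apply squeeze_zero (fun k => dist_nonneg) h1
      have h2 : Tendsto (fun k => dist (u (ψ (ρ k))) (γ (ψ (ρ k)))) atTop (𝓝 0) :=
        hγ0.comp ((hψ.comp hρ).tendsto_atTop)
      have h3 : Tendsto (fun k => dist ((u ∘ ψ ∘ ρ) k) a) atTop (𝓝 0) :=
        tendsto_iff_dist_tendsto_zero.mp ha
      simpa using h2.add h3
    have hevc : Continuous fun t : T => (t : X → ℝ) x :=
      (continuous_apply x).comp continuous_subtype_val
    have e1 : Tendsto (fun k => ((u (ψ (ρ k))) : X → ℝ) x) atTop (𝓝 ((a : X → ℝ) x)) := by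
      have := (hevc.tendsto a).comp ha
      exact this
    have e2 : Tendsto (fun k => ((γ (ψ (ρ k))) : X → ℝ) x) atTop (𝓝 ((a : X → ℝ) x)) := by
      have := (hevc.tendsto a).comp hγa
      exact this
    have e3 : Tendsto (fun k => ℓ (ψ (ρ k)) x - (γ (ψ (ρ k))).1 x) atTop (𝓝 0) := by
      have := e1.sub e2
      rw [sub_self] at this
      exact this
    have hlt : ∀ᶠ k in atTop, |ℓ (ψ (ρ k)) x - (γ (ψ (ρ k))).1 x| < ε := by
      obtain ⟨N, hN⟩ := Metric.tendsto_atTop.mp e3 ε hε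
      filter_upwards [eventually_ge_atTop N] with k hk
      have := hN k hk
      rwa [Real.dist_eq, sub_zero] at this
    obtain ⟨k, hk⟩ := hlt.exists
    exact absurd (hψprop (ρ k)) (not_le.mpr hk)
  -- assemble the linear maps
  refine ⟨fun n => IsLinearMap.mk' _ ⟨fun x y => hTadd _ (hγT n) x y,
      fun c x => hTsmul _ (hγT n) c x⟩, ?_, ?_⟩
  · intro n x
    simpa using hγbd n x
  · intro x
    simpa using hconv x

end KeySelection

/-- if `X` is a WCG Banach 𝒦-space with constant `K`, then every bounded
quasilinear map `F : X → c₀` with constant 1 is at distance at most `2(2K+1)` from a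
(not necessarily continuous) linear map; in particular `K₀(X, c₀)` is finite. -/
theorem K0_c0_finite_of_WCG_KSpace {X : Type*} [NormedAddCommGroup X] [NormedSpace ℝ X]
    [CompleteSpace X] (K : ℝ) (hWCG : IsWCG X) (hX : IsKSpaceWith K X)
    (F : X → NullSeq) (hF : IsQuasilinearWith 1 F)
    (hFbdd : ∃ C : ℝ, ∀ x : X, ‖F x‖ ≤ C * ‖x‖) :
    ∃ L : X →ₗ[ℝ] NullSeq, ∀ x : X, ‖F x - L x‖ ≤ 2 * (2 * K + 1) * ‖x‖ := by
  classical
  have hF0 : F 0 = 0 := by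
    have := hF.1 0 0
    simpa using this
  by_cases hex : ∃ x₀ : X, x₀ ≠ 0
  case neg =>
    push_neg at hex
    refine ⟨0, fun x => ?_⟩
    rw [hex x, hF0]
    simp
  case pos =>
  obtain ⟨x₀, hx₀⟩ := hex
  have hx₀n : 0 < ‖x₀‖ := norm_pos_iff.mpr hx₀
  obtain ⟨C, hC⟩ := hFbdd
  have hC0 : 0 ≤ C := by
    have h1 : (0:ℝ) ≤ ‖F x₀‖ := norm_nonneg _
    have h2 := hC x₀
    nlinarith
  -- K is nonnegative
  have hK0 : 0 ≤ K := by
    obtain ⟨ℓ₀, hℓ₀⟩ := hX (fun _ => 0) (fun c x => by simp) (fun x y => by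
      simp
      positivity)
    have h1 := hℓ₀ x₀
    have h2 : (0:ℝ) ≤ |(0:ℝ) - ℓ₀ x₀| := abs_nonneg _
    nlinarith [abs_nonneg ((0:ℝ) - ℓ₀ x₀), h1]
  obtain ⟨s, hsc, hsd⟩ := hWCG
  -- coordinates
  set f : ℕ → X → ℝ := fun n x => F x n with hf
  have hcoord : ∀ (g : ZeroAtInftyContinuousMap ℕ ℝ) (n : ℕ), |g n| ≤ ‖g‖ := by
    intro g n
    have := g.toBCF.norm_coe_le_norm n
    simpa [ZeroAtInftyContinuousMap.norm_toBCF_eq_norm] using this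
  have hfhom : ∀ n (c : ℝ) (x : X), f n (c • x) = c * f n x := by
    intro n c x
    rw [hf]
    simp only
    rw [hF.1 c x]
    simp
  have hfq : ∀ n (x y : X), |f n (x + y) - f n x - f n y| ≤ ‖x‖ + ‖y‖ := by
    intro n x y
    have h1 : f n (x+y) - f n x - f n y = (F (x+y) - F x - F y) n := by
      simp [hf]
    rw [h1]
    calc |(F (x+y) - F x - F y) n| ≤ ‖F (x+y) - F x - F y‖ := hcoord _ n
      _ ≤ 1 * (‖x‖ + ‖y‖) := hF.2 x y
      _ = ‖x‖ + ‖y‖ := one_mul _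
  -- apply the K-space property coordinatewise
  have hKn : ∀ n : ℕ, ∃ ℓ : X →ₗ[ℝ] ℝ, ∀ x, |f n x - ℓ x| ≤ K * ‖x‖ :=
    fun n => hX (f n) (hfhom n) (hfq n)
  choose ℓ hℓ using hKn
  -- bounds
  have hfb : ∀ n (x : X), |f n x| ≤ C * ‖x‖ := by
    intro n x
    calc |f n x| ≤ ‖F x‖ := hcoord (F x) n
      _ ≤ C * ‖x‖ := hC x
  have hlb : ∀ n (x : X), |ℓ n x| ≤ (C + K) * ‖x‖ := by
    intro n x
    have h1 := hℓ n x
    have h2 := hfb n x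
    have h3 : |ℓ n x| ≤ |f n x| + |f n x - ℓ n x| := by
      have h4 := abs_add_le (f n x) (ℓ n x - f n x)
      rw [abs_sub_comm (ℓ n x) (f n x)] at h4
      simpa using h4
    calc |ℓ n x| ≤ |f n x| + |f n x - ℓ n x| := h3
      _ ≤ C * ‖x‖ + K * ‖x‖ := add_le_add h2 h1
      _ = (C + K) * ‖x‖ := by ring
  have hftend : ∀ x : X, Tendsto (fun n => f n x) atTop (𝓝 0) := by
    intro x
    have := (F x).zero_at_infty'
    rwa [cocompact_eq_atTop (α := ℕ)] at this
  have hsmall : ∀ x : X, ∀ ε > 0, ∃ m, ∀ k ≥ m, |ℓ k x| ≤ K * ‖x‖ + ε := by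
    intro x ε hε
    obtain ⟨m, hm⟩ := (Metric.tendsto_atTop.mp (hftend x)) ε hε
    refine ⟨m, fun k hk => ?_⟩
    have h1 := hm k hk
    rw [Real.dist_eq, sub_zero] at h1
    have h2 := hℓ k x
    have h3 : |ℓ k x| ≤ |f k x| + |f k x - ℓ k x| := by
      have h4 := abs_add_le (f k x) (ℓ k x - f k x)
      rw [abs_sub_comm (ℓ k x) (f k x)] at h4
      simpa using h4
    calc |ℓ k x| ≤ |f k x| + |f k x - ℓ k x| := h3
      _ ≤ ε + K * ‖x‖ := by
          have := h1.le
          exact add_le_add this h2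
      _ = K * ‖x‖ + ε := by ring
  -- the selection
  obtain ⟨g, hgbd, hgtend⟩ := key_selection (C + K) K (by linarith) s hsc hsd ℓ hlb hsmall
  -- assemble L
  have hLtend : ∀ x : X, Tendsto (fun n => ℓ n x - g n x) atTop (𝓝 0) := hgtend
  set Lfun : X → ZeroAtInftyContinuousMap ℕ ℝ := fun x =>
    ⟨⟨fun n => ℓ n x - g n x, continuous_of_discreteTopology⟩, by
      rw [cocompact_eq_atTop (α := ℕ)]
      simpa using hLtend x⟩ with hLfun
  have hLapp : ∀ x n, Lfun x n = ℓ n x - g n x := fun x n => rfl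
  set L : X →ₗ[ℝ] ZeroAtInftyContinuousMap ℕ ℝ :=
    { toFun := Lfun
      map_add' := by
        intro x y
        ext n
        simp [hLapp, map_add]
        ring
      map_smul' := by
        intro c x
        ext n
        simp [hLapp, map_smul]
        ring } with hL
  refine ⟨L, fun x => ?_⟩
  have hnorm : ∀ (h : ZeroAtInftyContinuousMap ℕ ℝ) (b : ℝ), 0 ≤ b → (∀ n, |h n| ≤ b) →
      ‖h‖ ≤ b := by
    intro h b hb hbn
    rw [← ZeroAtInftyContinuousMap.norm_toBCF_eq_norm]
    apply BoundedContinuousFunction.norm_le hb |>.mpr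
    intro n
    simpa [Real.norm_eq_abs] using hbn n
  apply hnorm
  · positivity
  · intro n
    have h1 : (F x - L x) n = f n x - (ℓ n x - g n x) := by
      simp [hL, hLapp, hf]
    rw [h1]
    have h2 := hℓ n x
    have h3 := hgbd n x
    have h4 : |f n x - (ℓ n x - g n x)| ≤ |f n x - ℓ n x| + |g n x| := by
      have h5 := abs_add_le (f n x - ℓ n x) (g n x)
      have h6 : f n x - ℓ n x + g n x = f n x - (ℓ n x - g n x) := by ring
      rwa [h6] at h5
    calc |f n x - (ℓ n x - g n x)| ≤ |f n x - ℓ n x| + |g n x| := h4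
      _ ≤ K * ‖x‖ + K * ‖x‖ := add_le_add h2 h3
      _ ≤ 2 * (2 * K + 1) * ‖x‖ := by nlinarith [norm_nonneg x, hK0]
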